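/- Let B = M_n with faithful state ψ(a) = Tr(Qa), GNS space L²(B) with GNS map Λ, and multiplication operator m : L²(B) ⊗ L²(B) → L²(B), Λ(a)⊗Λ(b) ↦ Λ(ab). Then the Hilbert-space adjoint m* satisfies m*Λ(e_{ij}Q⁻¹) = Σ_k Λ(e_{ik}Q⁻¹) ⊗ Λ(e_{kj}Q⁻¹), and consequently m m* = Tr(Q⁻¹) · 1 on L²(B). -/

import Mathlib

open scoped ComplexOrder

lemma aux_trace {n : ℕ} (Q : Matrix (Fin n) (Fin n) ℂ) (hinv : Q⁻¹ * Q = 1)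
    (x : Matrix (Fin n) (Fin n) ℂ) (i k : Fin n) :
    (Q * star x * (Matrix.single i k 1 * Q⁻¹)).trace = star (x i k) := by
  rw [Matrix.trace_mul_comm]
  have : Matrix.single i k 1 * Q⁻¹ * (Q * star x)
      = Matrix.single i k 1 * star x := by
    rw [mul_assoc, ← mul_assoc Q⁻¹, hinv, one_mul]
  rw [this, Matrix.trace]
  rw [Finset.sum_eq_single i]
  · simp [Matrix.star_apply]
  · intro b _ hb
    simp [Matrix.diag, Matrix.single_mul_apply_of_ne (h := hb)]
  · simp

lemma aux_sandwich {n : ℕ} (M : Matrix (Fin n) (Fin n) ℂ) (i k j : Fin n) :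
    Matrix.single i k 1 * M * Matrix.single k j 1
      = Matrix.single i j (M k k) := by
  ext a b
  simp only [Matrix.mul_apply, Matrix.single, Matrix.of_apply, ite_and, boole_mul,
    mul_ite, mul_zero, mul_one, Finset.sum_ite_eq, Finset.sum_ite_eq', Finset.mem_univ, if_true]
  by_cases ha : i = a <;> by_cases hb : j = b <;> simp [ha, hb]

theorem stmt5 (n : ℕ) (Q : Matrix (Fin n) (Fin n) ℂ) (hQ : Q.PosDef) (hQtr : Q.trace = 1) :
    (∀ i j : Fin n, ∀ x y : Matrix (Fin n) (Fin n) ℂ,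
      (Q * star (x * y) * (Matrix.single i j 1 * Q⁻¹)).trace
        = ∑ k, (Q * star x * (Matrix.single i k 1 * Q⁻¹)).trace
            * (Q * star y * (Matrix.single k j 1 * Q⁻¹)).trace) ∧
    (∀ i j : Fin n,
      ∑ k, (Matrix.single i k 1 * Q⁻¹) * (Matrix.single k j 1 * Q⁻¹)
        = Q⁻¹.trace • (Matrix.single i j 1 * Q⁻¹)) := by
  have hinv : Q⁻¹ * Q = 1 := Matrix.nonsing_inv_mul Q (Matrix.isUnit_iff_isUnit_det _ |>.1 hQ.isUnit)
  constructor
  · intro i j x y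
    simp only [aux_trace Q hinv, Matrix.mul_apply, star_sum, star_mul']

  · intro i j
    have : ∀ k : Fin n, (Matrix.single i k 1 * Q⁻¹) * (Matrix.single k j 1 * Q⁻¹)
        = (Q⁻¹ k k) • (Matrix.single i j 1 * Q⁻¹) := by
      intro k
      rw [← mul_assoc, mul_assoc _ Q⁻¹, ← mul_assoc (Matrix.single i k 1),
        aux_sandwich, show Q⁻¹ k k = Q⁻¹ k k • (1 : ℂ) by simp,
        ← Matrix.smul_single, smul_mul_assoc]
      simp
    simp only [this, ← Finset.sum_smul, Matrix.trace, Matrix.diag]
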